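/- Let n ≥ 1, let L : Fin n → ℝ with L_j > 0, let A, B be 2n×2n complex matrices, and let α ∈ (0, π). Then the function u ↦ det( A + B · fromBlocks( diag_j(cos(uL_je^{iα})/sin(uL_je^{iα})), diag_j(−1/sin(uL_je^{iα})), diag_j(−1/sin(uL_je^{iα})), diag_j(cos(uL_je^{iα})/sin(uL_je^{iα})) ) ) (for u ∈ ℝ) tends to det(A − i•B) as u → +∞. -/

import Mathlib

open Matrix
open scoped Topology
open Filter

/-- Along the branch-cut ray of angle `α ∈ (0,π)`, the secular determinant of a general
massless graph Dirac operator tends to `det(A − iB)` as `u → +∞`. -/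
lemma aux_hs (z : ℂ) (h : Complex.exp (z * Complex.I) ^ 2 ≠ 1) : Complex.sin z ≠ 0 := by
  intro h0
  apply h
  rw [Complex.sin, neg_mul, Complex.exp_neg] at h0
  have he : Complex.exp (z * Complex.I) ≠ 0 := Complex.exp_ne_zero _
  field_simp at h0
  rw [mul_zero] at h0
  rcases mul_eq_zero.mp h0 with h0 | h0
  · exact absurd h0 Complex.I_ne_zero
  · rw [sq]; linear_combination -h0

lemma aux_cot (z : ℂ) (h : Complex.exp (z * Complex.I) ^ 2 ≠ 1) :
    Complex.cos z / Complex.sin z =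
      Complex.I * (Complex.exp (z * Complex.I) ^ 2 + 1) / (Complex.exp (z * Complex.I) ^ 2 - 1) := by
  have he : Complex.exp (z * Complex.I) ≠ 0 := Complex.exp_ne_zero _
  have h1 : Complex.exp (z * Complex.I) ^ 2 - 1 ≠ 0 := sub_ne_zero.mpr h
  have hs := aux_hs z h
  rw [div_eq_div_iff hs h1, Complex.sin, Complex.cos]
  simp only [neg_mul, Complex.exp_neg]
  field_simp
  linear_combination (Complex.exp (z*Complex.I)^4 - 1) * Complex.I_sq

lemma aux_csc (z : ℂ) (h : Complex.exp (z * Complex.I) ^ 2 ≠ 1) :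
    -1 / Complex.sin z =
      2 * Complex.I * Complex.exp (z * Complex.I) / (1 - Complex.exp (z * Complex.I) ^ 2) := by
  have he : Complex.exp (z * Complex.I) ≠ 0 := Complex.exp_ne_zero _
  have h1 : (1:ℂ) - Complex.exp (z * Complex.I) ^ 2 ≠ 0 := sub_ne_zero.mpr (Ne.symm h)
  have hs := aux_hs z h
  rw [div_eq_div_iff hs h1, Complex.sin]
  simp only [neg_mul, Complex.exp_neg]
  field_simp
  linear_combination -Complex.I_sq

lemma aux_e_tendsto (c α : ℝ) (hc : 0 < c) (hα : 0 < Real.sin α) :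
    Tendsto (fun u : ℝ =>
      Complex.exp (((u : ℂ) * c * Complex.exp (Complex.I * α)) * Complex.I))
      atTop (𝓝 0) := by
  rw [tendsto_zero_iff_norm_tendsto_zero]
  have hre : ∀ u : ℝ, (((u : ℂ) * c * Complex.exp (Complex.I * α)) * Complex.I).re
      = -(u * (c * Real.sin α)) := by
    intro u
    have h : Complex.exp (Complex.I * α) = Complex.cos α + Complex.sin α * Complex.I := by
      rw [mul_comm, Complex.exp_mul_I]
    rw [h]
    simp [Complex.mul_re, Complex.mul_im, Complex.cos_ofReal_re, Complex.sin_ofReal_re,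
      Complex.cos_ofReal_im, Complex.sin_ofReal_im]
    ring
  simp only [Complex.norm_exp, hre]
  exact Real.tendsto_exp_atBot.comp (tendsto_neg_atBot_iff.mpr
    (Tendsto.atTop_mul_const (by positivity) tendsto_id))

lemma aux_cot_tendsto (c α : ℝ) (hc : 0 < c) (hα : 0 < Real.sin α) :
    Tendsto (fun u : ℝ =>
      Complex.cos ((u : ℂ) * c * Complex.exp (Complex.I * α)) /
        Complex.sin ((u : ℂ) * c * Complex.exp (Complex.I * α)))
      atTop (𝓝 (-Complex.I)) := by
  set z : ℝ → ℂ := fun u => (u : ℂ) * c * Complex.exp (Complex.I * α) with hz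
  have he := aux_e_tendsto c α hc hα
  have hw : Tendsto (fun u => Complex.exp (z u * Complex.I) ^ 2) atTop (𝓝 0) := by
    have := he.mul he
    simpa [sq] using this
  have hne : ∀ᶠ u in atTop, Complex.exp (z u * Complex.I) ^ 2 ≠ 1 :=
    hw.eventually_ne (by norm_num)
  have hlim : Tendsto (fun u => Complex.I * (Complex.exp (z u * Complex.I) ^ 2 + 1) /
      (Complex.exp (z u * Complex.I) ^ 2 - 1)) atTop (𝓝 (-Complex.I)) := by
    have h := ((tendsto_const_nhds (x := Complex.I)).mul (hw.add_const 1)).div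
      (hw.sub_const 1) (by norm_num)
    have : Complex.I * (0 + 1) / (0 - 1) = -Complex.I := by rw [mul_add, mul_one, mul_zero, zero_add, zero_sub, div_neg, div_one]
    rw [this] at h
    exact h
  exact hlim.congr' (hne.mono fun u hu => (aux_cot (z u) hu).symm)

lemma aux_csc_tendsto (c α : ℝ) (hc : 0 < c) (hα : 0 < Real.sin α) :
    Tendsto (fun u : ℝ =>
      -1 / Complex.sin ((u : ℂ) * c * Complex.exp (Complex.I * α)))
      atTop (𝓝 0) := by
  set z : ℝ → ℂ := fun u => (u : ℂ) * c * Complex.exp (Complex.I * α) with hz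
  have he := aux_e_tendsto c α hc hα
  have hw : Tendsto (fun u => Complex.exp (z u * Complex.I) ^ 2) atTop (𝓝 0) := by
    have := he.mul he
    simpa [sq] using this
  have hne : ∀ᶠ u in atTop, Complex.exp (z u * Complex.I) ^ 2 ≠ 1 :=
    hw.eventually_ne (by norm_num)
  have hlim : Tendsto (fun u => 2 * Complex.I * Complex.exp (z u * Complex.I) /
      (1 - Complex.exp (z u * Complex.I) ^ 2)) atTop (𝓝 0) := by
    have := ((tendsto_const_nhds (x := 2 * Complex.I)).mul he).div
      ((tendsto_const_nhds (x := (1:ℂ))).sub hw) (by norm_num)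
    rw [mul_zero, zero_div] at this
    exact this
  exact hlim.congr' (hne.mono fun u hu => (aux_csc (z u) hu).symm)

theorem dirac_secular_det_limit_ray
    (n : ℕ) (hn : 1 ≤ n) (L : Fin n → ℝ) (hL : ∀ j, 0 < L j)
    (A B : Matrix (Fin n ⊕ Fin n) (Fin n ⊕ Fin n) ℂ)
    (α : ℝ) (hα : α ∈ Set.Ioo 0 Real.pi) :
    Filter.Tendsto
      (fun u : ℝ =>
        (A + B * Matrix.fromBlocks
          (Matrix.diagonal fun j => Complex.cos (u * L j * Complex.exp (Complex.I * α)) /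
            Complex.sin (u * L j * Complex.exp (Complex.I * α)))
          (Matrix.diagonal fun j => -1 / Complex.sin (u * L j * Complex.exp (Complex.I * α)))
          (Matrix.diagonal fun j => -1 / Complex.sin (u * L j * Complex.exp (Complex.I * α)))
          (Matrix.diagonal fun j => Complex.cos (u * L j * Complex.exp (Complex.I * α)) /
            Complex.sin (u * L j * Complex.exp (Complex.I * α)))).det)
      Filter.atTop
      (𝓝 ((A - Complex.I • B).det)) := by
  have hsin : 0 < Real.sin α := Real.sin_pos_of_pos_of_lt_pi hα.1 hα.2
  set M : ℝ → Matrix (Fin n ⊕ Fin n) (Fin n ⊕ Fin n) ℂ := fun u =>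
    Matrix.fromBlocks
      (Matrix.diagonal fun j => Complex.cos (u * L j * Complex.exp (Complex.I * α)) /
        Complex.sin (u * L j * Complex.exp (Complex.I * α)))
      (Matrix.diagonal fun j => -1 / Complex.sin (u * L j * Complex.exp (Complex.I * α)))
      (Matrix.diagonal fun j => -1 / Complex.sin (u * L j * Complex.exp (Complex.I * α)))
      (Matrix.diagonal fun j => Complex.cos (u * L j * Complex.exp (Complex.I * α)) /
        Complex.sin (u * L j * Complex.exp (Complex.I * α))) with hM
  set Mlim : Matrix (Fin n ⊕ Fin n) (Fin n ⊕ Fin n) ℂ :=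
    (-Complex.I) • (1 : Matrix (Fin n ⊕ Fin n) (Fin n ⊕ Fin n) ℂ) with hMlim
  have hMt : Tendsto M atTop (𝓝 Mlim) := by
    refine tendsto_pi_nhds.mpr ?_
    intro i
    rw [tendsto_pi_nhds]
    intro k
    cases i with
    | inl a =>
      cases k with
      | inl b =>
        by_cases hab : a = b
        · subst hab
          simpa [hM, hMlim, Matrix.one_apply] using aux_cot_tendsto (L a) α (hL a) hsin
        · simp [hM, hMlim, Matrix.diagonal_apply_ne _ hab, Matrix.one_apply, hab]
      | inr b =>
        by_cases hab : a = b
        · subst hab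
          simpa [hM, hMlim, Matrix.one_apply] using aux_csc_tendsto (L a) α (hL a) hsin
        · simp [hM, hMlim, Matrix.diagonal_apply_ne _ hab, Matrix.one_apply]
    | inr a =>
      cases k with
      | inl b =>
        by_cases hab : a = b
        · subst hab
          simpa [hM, hMlim, Matrix.one_apply] using aux_csc_tendsto (L a) α (hL a) hsin
        · simp [hM, hMlim, Matrix.diagonal_apply_ne _ hab, Matrix.one_apply]
      | inr b =>
        by_cases hab : a = b
        · subst hab
          simpa [hM, hMlim, Matrix.one_apply] using aux_cot_tendsto (L a) α (hL a) hsin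
        · simp [hM, hMlim, Matrix.diagonal_apply_ne _ hab, Matrix.one_apply, hab]
  have hcont : Continuous fun X : Matrix (Fin n ⊕ Fin n) (Fin n ⊕ Fin n) ℂ =>
      (A + B * X).det :=
    (continuous_const.add (continuous_const.matrix_mul continuous_id)).matrix_det
  have hfinal := (hcont.tendsto Mlim).comp hMt
  have heq : A + B * Mlim = A - Complex.I • B := by
    rw [hMlim, Matrix.mul_smul, Matrix.mul_one, neg_smul, ← sub_eq_add_neg]
  rw [heq] at hfinal
  exact hfinal
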